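/- Let q > 1, ε > 0, and let η : ℝ → ℝ be such that the function φ₀ defined by φ₀(x) = 1 for |x| ≤ ε, φ₀(x) = η(|x|) for ε < |x| ≤ εq, and φ₀(x) = 0 for |x| > εq, is smooth (and hence even, smooth and compactly supported). Define φ_{m+1}(x) = φ_m(x) − q^{−(m+1)} · φ_m(x/q) for m ∈ ℕ, and let ψ(x) = lim_{m→∞} φ_m(x). Then for every x ∈ ℝ, ψ(x) = ∏_{m=1}^∞(1 − q^{−m}) + Σ_{ℓ=0}^∞ [ (1/∏_{k=1}^{ℓ}(1 − q^k)) · η(|x|/q^ℓ) − Σ_{k=0}^{ℓ} 1/∏_{j=1}^{k}(1 − q^j) ] · 1_{(εq^ℓ, εq^{ℓ+1}]}(|x|), where empty products equal 1 and 1_I denotes the indicator function of the interval I. -/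

import Mathlib

open Filter Finset

namespace Stmt10Aux

variable {q : ℝ}

noncomputable def Cp (q : ℝ) (m : ℕ) : ℝ :=
  ∏ k ∈ Finset.range m, (1 - q ^ (-(k + 1) : ℤ))

noncomputable def aseq (q : ℝ) (j : ℕ) : ℝ :=
  1 / ∏ k ∈ Finset.Icc 1 j, (1 - q ^ k)

noncomputable def Ac (q : ℝ) (m j : ℕ) : ℝ :=
  if j ≤ m then aseq q j * Cp q m / Cp q (m - j) else 0

lemma zp (hq : 1 < q) (t : ℕ) : q ^ (-(t + 1) : ℤ) = q⁻¹ ^ (t + 1) := by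
  have h0 : q ≠ 0 := by positivity
  rw [zpow_neg, inv_pow, ← zpow_natCast q (t + 1)]
  push_cast
  ring_nf

lemma qinv_pos (hq : 1 < q) : 0 < q⁻¹ := by positivity
lemma qinv_lt_one (hq : 1 < q) : q⁻¹ < 1 := by
  rw [inv_lt_one_iff₀]; right; exact hq

lemma zp_lt_one (hq : 1 < q) (t : ℕ) : q ^ (-(t + 1) : ℤ) < 1 := by
  rw [zp hq t]
  exact pow_lt_one₀ (qinv_pos hq).le (qinv_lt_one hq) t.succ_ne_zero

lemma zp_pos (hq : 1 < q) (t : ℕ) : 0 < q ^ (-(t + 1) : ℤ) := by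
  rw [zp hq t]; positivity

lemma Cp_pos (hq : 1 < q) (m : ℕ) : 0 < Cp q m := by
  refine Finset.prod_pos fun k _ => ?_
  have := zp_lt_one hq k
  linarith

lemma Cp_ne (hq : 1 < q) (m : ℕ) : Cp q m ≠ 0 := (Cp_pos hq m).ne'

lemma Cp_succ (m : ℕ) : Cp q (m + 1) = Cp q m * (1 - q ^ (-(m + 1) : ℤ)) :=
  Finset.prod_range_succ _ m

lemma one_sub_pow_ne (hq : 1 < q) (j : ℕ) : (1 - q ^ (j + 1)) ≠ 0 := by
  have : 1 < q ^ (j + 1) := one_lt_pow₀ hq j.succ_ne_zero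
  linarith

lemma aseq_zero : aseq q 0 = 1 := by simp [aseq]

lemma aseq_succ (j : ℕ) : aseq q (j + 1) = aseq q j / (1 - q ^ (j + 1)) := by
  unfold aseq
  rw [Finset.prod_Icc_succ_top (Nat.le_add_left 1 j)]
  rw [div_div]

lemma aseq_ne (hq : 1 < q) (j : ℕ) : aseq q j ≠ 0 := by
  unfold aseq
  rw [one_div]
  refine inv_ne_zero (Finset.prod_ne_zero_iff.mpr fun k hk => ?_)
  have hk1 : 1 ≤ k := (Finset.mem_Icc.mp hk).1
  have : 1 < q ^ k := one_lt_pow₀ hq (by omega)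
  intro h; linarith

lemma mul_zp (hq : 1 < q) (n : ℕ) : q ^ (-(n + 1) : ℤ) * q ^ (n + 1) = 1 := by
  have h0 : q ≠ 0 := by positivity
  rw [← zpow_natCast q (n + 1), ← zpow_add₀ h0]
  rw [show (-(↑n + 1) + ((n:ℕ) + 1 : ℕ) : ℤ) = 0 by push_cast; ring, zpow_zero]

lemma Cp_zero : Cp q 0 = 1 := Finset.prod_range_zero _

lemma Ac_zero (hq : 1 < q) (m : ℕ) : Ac q m 0 = 1 := by
  unfold Ac
  rw [if_pos (Nat.zero_le m), aseq_zero, Nat.sub_zero, one_mul, div_self (Cp_ne hq m)]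

lemma Ac_of_gt {m j : ℕ} (h : m < j) : Ac q m j = 0 := by
  unfold Ac; rw [if_neg (by omega)]

lemma zrel (hq : 1 < q) (t j : ℕ) :
    q ^ (-(((t + j + 1 : ℕ) : ℤ) + 1)) * q ^ (j + 1) = q ^ (-((t : ℤ) + 1)) := by
  have h0 : q ≠ 0 := by positivity
  rw [← zpow_natCast q (j + 1), ← zpow_add₀ h0]
  congr 1
  push_cast
  ring

lemma Arec (hq : 1 < q) (m j : ℕ) :
    Ac q (m + 1) j = Ac q m j -
      q ^ (-(m + 1) : ℤ) * (if j = 0 then 0 else Ac q m (j - 1)) := by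
  match j with
  | 0 => simp [Ac_zero hq]
  | j' + 1 =>
    simp only [Nat.succ_ne_zero, if_false, Nat.add_sub_cancel]
    by_cases hjm : j' + 1 ≤ m + 1
    · by_cases hjm2 : j' + 1 ≤ m
      · obtain ⟨t, rfl⟩ : ∃ t, m = t + j' + 1 := ⟨m - j' - 1, by omega⟩
        have e1 : Ac q (t + j' + 1 + 1) (j' + 1) =
            aseq q (j' + 1) * Cp q (t + j' + 1 + 1) / Cp q (t + 1) := by
          unfold Ac; rw [if_pos (by omega)]; congr 2; omega
        have e2 : Ac q (t + j' + 1) (j' + 1) =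
            aseq q (j' + 1) * Cp q (t + j' + 1) / Cp q t := by
          unfold Ac; rw [if_pos (by omega)]; congr 2; omega
        have e3 : Ac q (t + j' + 1) j' =
            aseq q j' * Cp q (t + j' + 1) / Cp q (t + 1) := by
          unfold Ac; rw [if_pos (by omega)]; congr 2; omega
        rw [e1, e2, e3, aseq_succ, Cp_succ (t + j' + 1), Cp_succ t]
        have hXZ := zrel hq t j'
        have hZ : (1 - q ^ (j' + 1)) ≠ 0 := one_sub_pow_ne hq j'
        have hY : (1 - q ^ (-((t : ℤ) + 1))) ≠ 0 := by
          have := zp_lt_one hq t; intro h; rw [sub_eq_zero] at h; linarith [zp_lt_one hq t]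
        have hCt : Cp q t ≠ 0 := Cp_ne hq t
        set X := q ^ (-((t + j' + 1 : ℕ) : ℤ) + -1) with hX
        rw [show q ^ (-(((t + j' + 1 : ℕ) : ℤ) + 1)) = X by rw [hX]; ring_nf] at hXZ ⊢
        set Y := q ^ (-(t : ℤ) + -1) with hYd
        rw [show q ^ (-((t : ℤ) + 1)) = Y by rw [hYd]; ring_nf] at hXZ hY ⊢
        set Z := q ^ (j' + 1) with hZd
        set a := aseq q j'
        set b := Cp q (t + j' + 1)
        set c := Cp q t
        field_simp
        rw [hZd] at hXZ
        linear_combination (-(a * b)) * hXZ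
      · have hj : j' = m := by omega
        subst hj
        have e1 : Ac q (j' + 1) (j' + 1) = aseq q (j' + 1) * Cp q (j' + 1) := by
          unfold Ac; rw [if_pos le_rfl, Nat.sub_self, Cp_zero, div_one]
        have e2 : Ac q j' (j' + 1) = 0 := Ac_of_gt (by omega)
        have e3 : Ac q j' j' = aseq q j' * Cp q j' := by
          unfold Ac; rw [if_pos le_rfl, Nat.sub_self, Cp_zero, div_one]
        rw [e1, e2, e3, aseq_succ, Cp_succ j']
        have hXZ := mul_zp hq j'
        have hZ : (1 - q ^ (j' + 1)) ≠ 0 := one_sub_pow_ne hq j'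
        set X := q ^ (-(j' : ℤ) + -1) with hX
        rw [show q ^ (-((j' : ℤ) + 1)) = X by rw [hX]; ring_nf] at hXZ ⊢
        set Z := q ^ (j' + 1) with hZd
        set a := aseq q j'
        set b := Cp q j'
        field_simp
        linear_combination (-(a * b)) * hXZ
    · rw [Ac_of_gt (by omega : m + 1 < j' + 1), Ac_of_gt (by omega : m < j' + 1),
        Ac_of_gt (by omega : m < j')]
      ring

lemma sum_Ac (hq : 1 < q) (m : ℕ) :
    ∑ j ∈ Finset.range (m + 1), Ac q m j = Cp q m := by
  induction m with
  | zero => simp [Ac_zero hq, Cp_zero]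
  | succ m ih =>
    have h1 : ∑ j ∈ Finset.range (m + 1 + 1), Ac q (m + 1) j =
        ∑ j ∈ Finset.range (m + 1 + 1), (Ac q m j -
          q ^ (-(m + 1) : ℤ) * (if j = 0 then 0 else Ac q m (j - 1))) :=
      Finset.sum_congr rfl fun j _ => Arec hq m j
    rw [h1, Finset.sum_sub_distrib, ← Finset.mul_sum]
    have h2 : ∑ j ∈ Finset.range (m + 1 + 1), Ac q m j = Cp q m := by
      rw [Finset.sum_range_succ, Ac_of_gt (Nat.lt_succ_self m), add_zero, ih]
    have h3 : ∑ j ∈ Finset.range (m + 1 + 1),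
        (if j = 0 then (0:ℝ) else Ac q m (j - 1)) = Cp q m := by
      rw [Finset.sum_range_succ']
      simp only [Nat.succ_ne_zero, if_false, Nat.add_sub_cancel, eq_self_iff_true, if_true,
        add_zero]
      exact ih
    rw [h2, h3, Cp_succ]
    ring

lemma Ac_prod_form (hq : 1 < q) {m j : ℕ} (h : j ≤ m) :
    Ac q m j = aseq q j * ∏ i ∈ Finset.range j, (1 - q ^ (-((m - j + i : ℕ) : ℤ) + -1)) := by
  unfold Ac
  rw [if_pos h]
  have hsplit : Cp q m = Cp q (m - j) *
      ∏ i ∈ Finset.range j, (1 - q ^ (-((m - j + i : ℕ) : ℤ) + -1)) := by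
    have := Finset.prod_range_add (fun k => (1 - q ^ (-(k + 1) : ℤ))) (m - j) j
    rw [show m - j + j = m by omega] at this
    rw [Cp, this]
    congr 1
    refine Finset.prod_congr rfl fun i _ => ?_
    congr 2
    push_cast
    ring
  rw [hsplit]
  rw [mul_comm (Cp q (m - j)) _, ← mul_assoc, mul_div_assoc,
    div_self (Cp_ne hq (m - j)), mul_one]

lemma tendsto_Ac (hq : 1 < q) (j : ℕ) :
    Tendsto (fun m => Ac q m j) atTop (nhds (aseq q j)) := by
  have key : Tendsto (fun m => aseq q j *
      ∏ i ∈ Finset.range j, (1 - q ^ (-((m - j + i : ℕ) : ℤ) + -1))) atTop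
      (nhds (aseq q j * ∏ _i ∈ Finset.range j, (1 : ℝ))) := by
    refine Tendsto.const_mul _ (tendsto_finset_prod _ fun i _ => ?_)
    have hpow : Tendsto (fun n : ℕ => (q⁻¹) ^ n) atTop (nhds 0) :=
      tendsto_pow_atTop_nhds_zero_of_lt_one (qinv_pos hq).le (qinv_lt_one hq)
    have harg : Tendsto (fun m : ℕ => m - j + i + 1) atTop atTop := by
      refine tendsto_atTop_atTop.mpr fun b => ⟨b + j, fun a ha => by omega⟩
    have h2 : Tendsto (fun m : ℕ => (q⁻¹) ^ (m - j + i + 1)) atTop (nhds 0) :=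
      hpow.comp harg
    have h3 : (fun m : ℕ => q ^ (-((m - j + i : ℕ) : ℤ) + -1)) =
        fun m : ℕ => (q⁻¹) ^ (m - j + i + 1) := by
      funext m
      rw [← zp hq (m - j + i)]
      congr 1
      push_cast
      ring
    have h4 : Tendsto (fun m : ℕ => q ^ (-((m - j + i : ℕ) : ℤ) + -1)) atTop (nhds 0) := by
      rw [h3]; exact h2
    simpa using tendsto_const_nhds.sub h4
  simp only [Finset.prod_const_one, mul_one] at key
  refine key.congr' ?_
  filter_upwards [eventually_ge_atTop j] with m hm
  exact (Ac_prod_form hq hm).symm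

lemma summable_log (hq : 1 < q) :
    Summable (fun m : ℕ => Real.log (1 - q ^ (-(m + 1) : ℤ))) := by
  have hr0 := qinv_pos hq
  have hr1 := qinv_lt_one hq
  refine Summable.of_abs ?_
  have hb : Summable (fun m : ℕ => (q⁻¹ / (1 - q⁻¹)) * q⁻¹ ^ m) :=
    (summable_geometric_of_lt_one hr0.le hr1).mul_left _
  refine Summable.of_nonneg_of_le (fun m => abs_nonneg _) (fun m => ?_) hb
  have hx : q⁻¹ ^ (m + 1) ≤ q⁻¹ := by
    calc q⁻¹ ^ (m + 1) ≤ q⁻¹ ^ 1 :=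
      pow_le_pow_of_le_one hr0.le hr1.le (by omega)
    _ = q⁻¹ := pow_one _
  have hxpos : (0:ℝ) < q⁻¹ ^ (m + 1) := by positivity
  have ht0 : (0:ℝ) < 1 - q⁻¹ ^ (m + 1) := by nlinarith
  have ht1 : 1 - q⁻¹ ^ (m + 1) ≤ 1 := by nlinarith
  rw [zp hq m]
  have hlog0 : Real.log (1 - q⁻¹ ^ (m + 1)) ≤ 0 := Real.log_nonpos ht0.le ht1
  rw [abs_of_nonpos hlog0]
  have h2 : -Real.log (1 - q⁻¹ ^ (m + 1)) = Real.log (1 - q⁻¹ ^ (m + 1))⁻¹ :=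
    (Real.log_inv _).symm
  rw [h2]
  have h3 : Real.log (1 - q⁻¹ ^ (m + 1))⁻¹ ≤ (1 - q⁻¹ ^ (m + 1))⁻¹ - 1 :=
    Real.log_le_sub_one_of_pos (by positivity)
  have h4 : (1 - q⁻¹ ^ (m + 1))⁻¹ - 1 = q⁻¹ ^ (m + 1) / (1 - q⁻¹ ^ (m + 1)) := by
    rw [eq_div_iff ht0.ne', sub_mul, inv_mul_cancel₀ ht0.ne', one_mul]
    ring
  have h5 : q⁻¹ ^ (m + 1) / (1 - q⁻¹ ^ (m + 1)) ≤ q⁻¹ ^ (m + 1) / (1 - q⁻¹) := by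
    apply div_le_div_of_nonneg_left hxpos.le (by nlinarith) (by nlinarith)
  calc Real.log (1 - q⁻¹ ^ (m + 1))⁻¹ ≤ (1 - q⁻¹ ^ (m + 1))⁻¹ - 1 := h3
  _ = q⁻¹ ^ (m + 1) / (1 - q⁻¹ ^ (m + 1)) := h4
  _ ≤ q⁻¹ ^ (m + 1) / (1 - q⁻¹) := h5
  _ = (q⁻¹ / (1 - q⁻¹)) * q⁻¹ ^ m := by rw [pow_succ]; ring

lemma hasProd_P (hq : 1 < q) :
    HasProd (fun m : ℕ => 1 - q ^ (-(m + 1) : ℤ))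
      (∏' m : ℕ, (1 - q ^ (-(m + 1) : ℤ))) := by
  have := (Real.multipliable_of_summable_log (f := fun m : ℕ => 1 - q ^ (-(m + 1) : ℤ))
    (fun n => by
      show (0:ℝ) < 1 - q ^ (-(n + 1) : ℤ)
      have := zp_lt_one hq n; linarith)
    (summable_log hq)).hasProd
  exact this

lemma tendsto_Cp (hq : 1 < q) :
    Tendsto (fun m => Cp q m) atTop
      (nhds (∏' m : ℕ, (1 - q ^ (-(m + 1) : ℤ)))) :=
  (hasProd_P hq).tendsto_prod_nat

end Stmt10Aux

open Filter Stmt10Aux in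
/-- explicit formula for the limit function `ψ` (Theorem `construction`). -/
theorem stmt_10 (q : ℝ) (hq : 1 < q) (ε : ℝ) (hε : 0 < ε) (η : ℝ → ℝ) (φ₀ : ℝ → ℝ)
    (hdef1 : ∀ x : ℝ, |x| ≤ ε → φ₀ x = 1)
    (hdef2 : ∀ x : ℝ, ε < |x| → |x| ≤ ε * q → φ₀ x = η |x|)
    (hdef3 : ∀ x : ℝ, ε * q < |x| → φ₀ x = 0)
    (hsmooth : ContDiff ℝ (⊤ : ℕ∞) φ₀)
    (φ : ℕ → ℝ → ℝ) (hφ0 : φ 0 = φ₀)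
    (hrec : ∀ m : ℕ, ∀ x : ℝ, φ (m + 1) x = φ m x - q ^ (-(m + 1 : ℤ)) * φ m (x / q))
    (ψ : ℝ → ℝ) (hψ : ∀ x : ℝ, Tendsto (fun m => φ m x) atTop (nhds (ψ x))) :
    ∀ x : ℝ,
      ψ x = (∏' m : ℕ, (1 - q ^ (-(m + 1) : ℤ))) +
        ∑' ℓ : ℕ,
          ((1 / ∏ k ∈ Finset.Icc 1 ℓ, (1 - q ^ k)) * η (|x| / q ^ ℓ) -
              ∑ k ∈ Finset.range (ℓ + 1), 1 / ∏ j ∈ Finset.Icc 1 k, (1 - q ^ j)) *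
            Set.indicator (Set.Ioc (ε * q ^ ℓ) (ε * q ^ (ℓ + 1))) (fun _ => (1 : ℝ)) |x| := by
  have hq0 : (0:ℝ) < q := lt_trans one_pos hq
  intro x
  -- core: on [-ε, ε] the function φ m is constantly `Cp q m`
  have hcore : ∀ m, ∀ y : ℝ, |y| ≤ ε → φ m y = Cp q m := by
    intro m
    induction m with
    | zero => intro y hy; rw [hφ0, hdef1 y hy, Cp_zero]
    | succ m ih =>
      intro y hy
      have hyq : |y / q| ≤ ε := by
        rw [abs_div, abs_of_pos hq0]
        calc |y| / q ≤ |y| := div_le_self (abs_nonneg y) hq.le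
        _ ≤ ε := hy
      rw [hrec m y, ih y hy, ih _ hyq, Cp_succ]
      ring
  -- expansion of φ m in terms of φ₀
  have hexp : ∀ m, ∀ z : ℝ, φ m z =
      ∑ j ∈ Finset.range (m + 1), Ac q m j * φ₀ (z / q ^ j) := by
    intro m
    induction m with
    | zero =>
      intro z
      rw [hφ0]
      simp [Ac_zero hq]
    | succ m ih =>
      intro z
      rw [hrec m z, ih z, ih (z / q)]
      have hsum1 : ∑ j ∈ Finset.range (m + 1 + 1), Ac q (m + 1) j * φ₀ (z / q ^ j)
          = ∑ j ∈ Finset.range (m + 1 + 1), (Ac q m j * φ₀ (z / q ^ j)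
             - q ^ (-(m + 1) : ℤ) *
               ((if j = 0 then 0 else Ac q m (j - 1)) * φ₀ (z / q ^ j))) := by
        refine Finset.sum_congr rfl fun j _ => ?_
        rw [Arec hq m j]; ring
      rw [hsum1, Finset.sum_sub_distrib, ← Finset.mul_sum]
      congr 1
      · rw [Finset.sum_range_succ (fun j => Ac q m j * φ₀ (z / q ^ j)) (m + 1),
          Ac_of_gt (Nat.lt_succ_self m), zero_mul, add_zero]
      · congr 1
        rw [Finset.sum_range_succ' (fun j =>
          (if j = 0 then (0:ℝ) else Ac q m (j - 1)) * φ₀ (z / q ^ j)) (m + 1)]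
        simp only [Nat.succ_ne_zero, if_false, Nat.add_sub_cancel, eq_self_iff_true, if_true,
          zero_mul, add_zero]
        refine Finset.sum_congr rfl fun i _ => ?_
        congr 2
        rw [div_div, pow_succ, mul_comm (q ^ i) q]
  by_cases hx : |x| ≤ ε
  · -- the central case
    have hz : ∀ ℓ : ℕ,
        ((1 / ∏ k ∈ Finset.Icc 1 ℓ, (1 - q ^ k)) * η (|x| / q ^ ℓ) -
            ∑ k ∈ Finset.range (ℓ + 1), 1 / ∏ j ∈ Finset.Icc 1 k, (1 - q ^ j)) *
          Set.indicator (Set.Ioc (ε * q ^ ℓ) (ε * q ^ (ℓ + 1))) (fun _ => (1 : ℝ)) |x| = 0 := by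
      intro ℓ
      have hnot : |x| ∉ Set.Ioc (ε * q ^ ℓ) (ε * q ^ (ℓ + 1)) := by
        rintro ⟨h1, -⟩
        have h2 : (1:ℝ) ≤ q ^ ℓ := one_le_pow₀ hq.le
        nlinarith
      rw [Set.indicator_of_notMem hnot, mul_zero]
    rw [tsum_congr hz, tsum_zero, add_zero]
    have hT : Tendsto (fun m => φ m x) atTop
        (nhds (∏' m : ℕ, (1 - q ^ (-(m + 1) : ℤ)))) :=
      (tendsto_Cp hq).congr fun m => (hcore m x hx).symm
    exact tendsto_nhds_unique (hψ x) hT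
  · push_neg at hx
    obtain ⟨n, hn⟩ : ∃ n : ℕ, |x| ≤ ε * q ^ n := by
      obtain ⟨n, hn⟩ := pow_unbounded_of_one_lt (|x| / ε) hq
      refine ⟨n, ?_⟩
      rw [div_lt_iff₀ hε] at hn
      nlinarith
    have hex : ∃ n : ℕ, |x| ≤ ε * q ^ n := ⟨n, hn⟩
    have hNspec := Nat.find_spec hex
    have hN0 : Nat.find hex ≠ 0 := by
      intro h
      rw [h, pow_zero, mul_one] at hNspec
      exact absurd hNspec (not_le.mpr hx)
    set ℓ := Nat.find hex - 1 with hℓ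
    have hfind : Nat.find hex = ℓ + 1 := by omega
    have hhigh : |x| ≤ ε * q ^ (ℓ + 1) := by rw [← hfind]; exact hNspec
    have hlow : ε * q ^ ℓ < |x| := not_le.mp (Nat.find_min hex (by omega))
    -- collapse the tsum to a single term
    have hsingle : ∀ ℓ' : ℕ, ℓ' ≠ ℓ →
        ((1 / ∏ k ∈ Finset.Icc 1 ℓ', (1 - q ^ k)) * η (|x| / q ^ ℓ') -
            ∑ k ∈ Finset.range (ℓ' + 1), 1 / ∏ j ∈ Finset.Icc 1 k, (1 - q ^ j)) *
          Set.indicator (Set.Ioc (ε * q ^ ℓ') (ε * q ^ (ℓ' + 1))) (fun _ => (1 : ℝ)) |x|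
            = 0 := by
      intro ℓ' hℓ'
      have hnot : |x| ∉ Set.Ioc (ε * q ^ ℓ') (ε * q ^ (ℓ' + 1)) := by
        rintro ⟨h1, h2⟩
        rcases lt_or_gt_of_ne hℓ' with hlt | hgt
        · have : ε * q ^ (ℓ' + 1) ≤ ε * q ^ ℓ :=
            mul_le_mul_of_nonneg_left (pow_le_pow_right₀ hq.le (by omega)) hε.le
          linarith
        · have : ε * q ^ (ℓ + 1) ≤ ε * q ^ ℓ' :=
            mul_le_mul_of_nonneg_left (pow_le_pow_right₀ hq.le (by omega)) hε.le
          linarith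
      rw [Set.indicator_of_notMem hnot, mul_zero]
    rw [tsum_eq_single ℓ hsingle,
      Set.indicator_of_mem (Set.mem_Ioc.mpr ⟨hlow, hhigh⟩) (fun _ => (1:ℝ))]
    -- explicit value of φ m x for m ≥ ℓ
    have hval : ∀ m, ℓ ≤ m → φ m x =
        Ac q m ℓ * η (|x| / q ^ ℓ) +
          (Cp q m - ∑ j ∈ Finset.range (ℓ + 1), Ac q m j) := by
      intro m hm
      rw [hexp m x]
      have hφ₀val : ∀ j, j < ℓ → φ₀ (x / q ^ j) = 0 := by
        intro j hj
        apply hdef3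
        rw [abs_div, abs_of_pos (pow_pos hq0 j), lt_div_iff₀ (pow_pos hq0 j)]
        have h1 : ε * q ^ (j + 1) ≤ ε * q ^ ℓ :=
          mul_le_mul_of_nonneg_left (pow_le_pow_right₀ hq.le (by omega)) hε.le
        have h2 : ε * q * q ^ j = ε * q ^ (j + 1) := by rw [pow_succ]; ring
        linarith
      have hφ₀ℓ : φ₀ (x / q ^ ℓ) = η (|x| / q ^ ℓ) := by
        have habs : |x / q ^ ℓ| = |x| / q ^ ℓ := by
          rw [abs_div, abs_of_pos (pow_pos hq0 ℓ)]
        rw [hdef2 _ ?_ ?_, habs]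
        · rw [habs, lt_div_iff₀ (pow_pos hq0 ℓ)]
          linarith
        · rw [habs, div_le_iff₀ (pow_pos hq0 ℓ)]
          have h2 : ε * q * q ^ ℓ = ε * q ^ (ℓ + 1) := by rw [pow_succ]; ring
          linarith
      have hφ₀one : ∀ j, ℓ < j → φ₀ (x / q ^ j) = 1 := by
        intro j hj
        apply hdef1
        rw [abs_div, abs_of_pos (pow_pos hq0 j), div_le_iff₀ (pow_pos hq0 j)]
        have h1 : ε * q ^ (ℓ + 1) ≤ ε * q ^ j :=
          mul_le_mul_of_nonneg_left (pow_le_pow_right₀ hq.le (by omega)) hε.le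
        have h2 : ε * q ^ j = ε * q ^ j := rfl
        nlinarith [pow_pos hq0 j]
      rw [Finset.range_eq_Ico,
        ← Finset.sum_Ico_consecutive _ (Nat.zero_le (ℓ + 1)) (by omega : ℓ + 1 ≤ m + 1)]
      have hchunk1 : ∑ j ∈ Finset.Ico 0 (ℓ + 1), Ac q m j * φ₀ (x / q ^ j)
          = Ac q m ℓ * η (|x| / q ^ ℓ) := by
        rw [← Finset.range_eq_Ico, Finset.sum_range_succ, hφ₀ℓ]
        rw [Finset.sum_eq_zero fun j hj => by
          rw [hφ₀val j (Finset.mem_range.mp hj), mul_zero], zero_add]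
      have hchunk2 : ∑ j ∈ Finset.Ico (ℓ + 1) (m + 1), Ac q m j * φ₀ (x / q ^ j)
          = Cp q m - ∑ j ∈ Finset.range (ℓ + 1), Ac q m j := by
        have : ∑ j ∈ Finset.Ico (ℓ + 1) (m + 1), Ac q m j * φ₀ (x / q ^ j)
            = ∑ j ∈ Finset.Ico (ℓ + 1) (m + 1), Ac q m j := by
          refine Finset.sum_congr rfl fun j hj => ?_
          rw [hφ₀one j (Finset.mem_Ico.mp hj).1, mul_one]
        rw [this, Finset.sum_Ico_eq_sub _ (by omega : ℓ + 1 ≤ m + 1), sum_Ac hq m]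
      rw [hchunk1, hchunk2]
    -- take the limit
    have hlim : Tendsto (fun m => Ac q m ℓ * η (|x| / q ^ ℓ) +
        (Cp q m - ∑ j ∈ Finset.range (ℓ + 1), Ac q m j)) atTop
        (nhds (aseq q ℓ * η (|x| / q ^ ℓ) +
          ((∏' m : ℕ, (1 - q ^ (-(m + 1) : ℤ))) -
            ∑ j ∈ Finset.range (ℓ + 1), aseq q j))) := by
      refine Tendsto.add ((tendsto_Ac hq ℓ).mul_const _) (Tendsto.sub (tendsto_Cp hq) ?_)
      exact tendsto_finset_sum _ fun j _ => tendsto_Ac hq j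
    have hψx : ψ x = aseq q ℓ * η (|x| / q ^ ℓ) +
        ((∏' m : ℕ, (1 - q ^ (-(m + 1) : ℤ))) - ∑ j ∈ Finset.range (ℓ + 1), aseq q j) := by
      refine tendsto_nhds_unique (hψ x) (hlim.congr' ?_)
      filter_upwards [eventually_ge_atTop ℓ] with m hm
      exact (hval m hm).symm
    rw [hψx]
    simp only [aseq]
    ring
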